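/- arXiv:0905.4248 — 2 statements merged into one kernel-verified Lean document; each statement's English description precedes it below -/
import Mathlib

section
/- For every r ≥ 1, D_2(C_2^r) < (3r + 6)/2, i.e., every sequence over C_2^r of length at least ⌈(3r+6)/2⌉ contains two disjoint nonempty zero-sum subsequences. -/
open Multiset

/-- A nonempty zero-sum sequence (multiset) over `G`. -/
def IsZeroSumSeq {G : Type*} [AddCommGroup G] (S : Multiset G) : Prop :=
  S ≠ 0 ∧ S.sum = 0

/-- A minimal zero-sum sequence: nonempty, zero-sum, and with no proper
nonempty zero-sum subsequence. -/
def IsMinZeroSum {G : Type*} [AddCommGroup G] (S : Multiset G) : Prop :=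
  S ≠ 0 ∧ S.sum = 0 ∧ ∀ T : Multiset G, T ≤ S → T ≠ 0 → T.sum = 0 → T = S

/-- `ζ` is a factorization of `B` into minimal zero-sum sequences. -/
def IsFactorization {G : Type*} [AddCommGroup G] (ζ : Multiset (Multiset G))
    (B : Multiset G) : Prop :=
  ζ.sum = B ∧ ∀ A ∈ ζ, IsMinZeroSum A

/-- The set of lengths `L(B)` of factorizations of `B` into minimal zero-sum
sequences. -/
def lengthSet {G : Type*} [AddCommGroup G] (B : Multiset G) : Set ℕ :=
  { n | ∃ ζ : Multiset (Multiset G), IsFactorization ζ B ∧ Multiset.card ζ = n }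

/-- `max L(B)`, the maximal length of a factorization of `B` into minimal
zero-sum sequences. -/
noncomputable def maxL {G : Type*} [AddCommGroup G] (B : Multiset G) : ℕ :=
  sSup (lengthSet B)

/-- `S` contains `k` disjoint nonempty zero-sum subsequences. -/
def HasKDisjointZeroSum {G : Type*} [AddCommGroup G] (k : ℕ) (S : Multiset G) : Prop :=
  ∃ T : Multiset (Multiset G), Multiset.card T = k ∧
    (∀ A ∈ T, IsZeroSumSeq A) ∧ T.sum ≤ S

/-- The `k`-wise Davenport constant: the smallest `ℓ` such that every sequence
over `G` of length at least `ℓ` has `k` disjoint nonempty zero-sum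
subsequences. -/
noncomputable def Dk (G : Type*) [AddCommGroup G] (k : ℕ) : ℕ :=
  sInf { ℓ : ℕ | ∀ S : Multiset G, ℓ ≤ Multiset.card S → HasKDisjointZeroSum k S }

/-- `s_{≤ k}(G)` as an extended natural number: the smallest `m` such that every
sequence over `G` of length at least `m` has a nonempty zero-sum subsequence of
length at most `k`. -/
noncomputable def sLE (G : Type*) [AddCommGroup G] (k : ℕ) : ℕ∞ :=
  sInf { m : ℕ∞ | ∀ S : Multiset G, m ≤ (Multiset.card S : ℕ∞) →
    ∃ T ≤ S, T ≠ 0 ∧ T.sum = 0 ∧ Multiset.card T ≤ k }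

/-- `s_{≤ k}(G)` as a natural number (used when it is known to be finite). -/
noncomputable def sleN (G : Type*) [AddCommGroup G] (k : ℕ) : ℕ :=
  sInf { m : ℕ | ∀ S : Multiset G, m ≤ Multiset.card S →
    ∃ T ≤ S, T ≠ 0 ∧ T.sum = 0 ∧ Multiset.card T ≤ k }

/-- `η(G) = s_{≤ exp(G)}(G)`. -/
noncomputable def etaC (G : Type*) [AddCommGroup G] : ℕ :=
  sleN G (AddMonoid.exponent G)


section Statement17Core

open Module Submodule

open scoped Classical

private lemma zmod2_em (x : ZMod 2) : x = 0 ∨ x = 1 := by revert x; decide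

private lemma m2_add_self {M : Type*} [AddCommGroup M] [Module (ZMod 2) M] (x : M) :
    x + x = 0 := by
  have h := two_smul (ZMod 2) x
  have h2 : (2 : ZMod 2) = 0 := by decide
  rw [h2, zero_smul] at h
  exact h.symm

private lemma ker_rank_succ {M : Type*} [AddCommGroup M] [Module (ZMod 2) M]
    [FiniteDimensional (ZMod 2) M] (g : M →ₗ[ZMod 2] ZMod 2) (hg : g ≠ 0) :
    Module.finrank (ZMod 2) (LinearMap.ker g) + 1 = Module.finrank (ZMod 2) M := by
  obtain ⟨x, hx⟩ := DFunLike.ne_iff.mp hg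
  have hx1 : g x = 1 := by
    rcases zmod2_em (g x) with h | h
    · exact absurd h hx
    · exact h
  have hsurj : LinearMap.range g = ⊤ := by
    rw [LinearMap.range_eq_top]
    intro c
    exact ⟨c • x, by rw [map_smul, hx1, smul_eq_mul, mul_one]⟩
  have h1 := LinearMap.finrank_range_add_finrank_ker g
  rw [hsurj] at h1
  rw [finrank_top, Module.finrank_self] at h1
  omega

variable {V : Type*} [AddCommGroup V] [Module (ZMod 2) V] [FiniteDimensional (ZMod 2) V]

private lemma lemA (T : Multiset V)
    (H1 : ∀ u v : Module.Dual (ZMod 2) V, u ≠ 0 → v ≠ 0 → u ≠ v →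
      ∃ h ∈ T, u h = 1 ∧ v h = 1)
    (hd : 2 ≤ Module.finrank (ZMod 2) V)
    (u : Module.Dual (ZMod 2) V) (hu : u ≠ 0) :
    ∃ W : Submodule (ZMod 2) V,
      Module.finrank (ZMod 2) W = Module.finrank (ZMod 2) V - 2 ∧
      Multiset.card (T.filter (fun x => x ∈ W)) + (Module.finrank (ZMod 2) V - 1) ≤
        Multiset.card (T.filter (fun x => x ∈ LinearMap.ker u)) := by
  set d := Module.finrank (ZMod 2) V with hdd
  have hker_rank : Module.finrank (ZMod 2) (LinearMap.ker u) = d - 1 := by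
    have := ker_rank_succ u hu
    omega
  -- the elements of T in the kernel span the kernel
  set St : Set V := {x | x ∈ T ∧ u x = 0} with hSt
  have hle : Submodule.span (ZMod 2) St ≤ LinearMap.ker u := by
    rw [Submodule.span_le]
    intro x hx
    exact LinearMap.mem_ker.mpr hx.2
  have hspan : Submodule.span (ZMod 2) St = LinearMap.ker u := by
    rcases eq_or_lt_of_le hle with h | hlt
    · exact h
    · exfalso
      set V₀ := Submodule.span (ZMod 2) St with hV₀
      have hV₀rank : Module.finrank (ZMod 2) V₀ ≤ d - 2 := by
        have := Submodule.finrank_lt_finrank_of_lt hlt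
        omega
      have hannrank : 2 ≤ Module.finrank (ZMod 2) V₀.dualAnnihilator := by
        have h1 : Module.finrank (ZMod 2) (V ⧸ V₀) =
            Module.finrank (ZMod 2) V₀.dualAnnihilator :=
          LinearEquiv.finrank_eq (Subspace.quotEquivAnnihilator V₀)
        have h2 := Submodule.finrank_quotient_add_finrank V₀
        omega
      have hnotle : ¬ (V₀.dualAnnihilator ≤ Submodule.span (ZMod 2) {u}) := by
        intro hle2
        have h1 : Module.finrank (ZMod 2) V₀.dualAnnihilator ≤
            Module.finrank (ZMod 2) (Submodule.span (ZMod 2) ({u} : Set (Module.Dual (ZMod 2) V))) :=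
          Submodule.finrank_mono hle2
        rw [finrank_span_singleton hu] at h1
        omega
      obtain ⟨v, hvann, hvspan⟩ := SetLike.not_le_iff_exists.mp hnotle
      have hv0 : v ≠ 0 := fun h => hvspan (h ▸ Submodule.zero_mem _)
      have hvu : v ≠ u := by
        intro h
        apply hvspan
        rw [h]
        exact Submodule.mem_span_singleton_self u
      have huv0 : u + v ≠ 0 := by
        intro h
        apply hvu
        have h' := congrArg (fun z => u + z) h
        simp only [add_zero] at h'
        rw [← add_assoc, m2_add_self u, zero_add] at h'
        exact h'
      have huvv : u + v ≠ v := by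
        intro h
        apply hu
        have := congrArg (fun z => z + v) h
        simpa [add_assoc, m2_add_self v] using this
      obtain ⟨h, hhT, h1, h2⟩ := H1 (u + v) v huv0 hv0 huvv
      have huh : u h = 0 := by
        have hsum : u h + v h = 1 := by
          rw [← LinearMap.add_apply]; exact h1
        rw [h2] at hsum
        have := zmod2_em (u h)
        rcases this with h' | h'
        · exact h'
        · rw [h'] at hsum; exact absurd hsum (by decide)
      have hmem : h ∈ V₀ := Submodule.subset_span ⟨hhT, huh⟩
      have := (Submodule.mem_dualAnnihilator v).mp hvann h hmem
      rw [this] at h2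
      exact absurd h2 (by decide)
  -- extract a basis of the kernel from T ∩ ker u
  obtain ⟨t, hts, htspan, htli⟩ := exists_linearIndependent (ZMod 2) St
  have htfin : t.Finite := htli.setFinite
  haveI := htfin.fintype
  have htcard : t.toFinset.card = d - 1 := by
    have := finrank_span_set_eq_card htli
    rw [htspan, hspan, hker_rank] at this
    omega
  -- a functional equal to 1 on all of t
  set B := Basis.extend htli with hBdef
  set φ : Module.Dual (ZMod 2) V := B.sumCoords with hφdef
  have hφt : ∀ x ∈ t, φ x = 1 := by
    intro x hx
    have htli' : LinearIndepOn (ZMod 2) id t := htli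
    have hmem : x ∈ htli'.extend (Set.subset_univ t) := htli'.subset_extend _ hx
    have hBx : B ⟨x, hmem⟩ = x := Module.Basis.extend_apply_self htli ⟨x, hmem⟩
    rw [hφdef, ← hBx]
    exact B.sumCoords_self_apply _
  -- t is nonempty
  have htne : t.Nonempty := by
    rw [← Set.toFinset_nonempty]
    rw [← Finset.card_pos, htcard]
    omega
  obtain ⟨x0, hx0⟩ := htne
  have hx0St : x0 ∈ St := hts hx0
  -- the codimension two subspace
  set W : Submodule (ZMod 2) V := LinearMap.ker u ⊓ LinearMap.ker φ with hWdef
  have hWle : W ≤ LinearMap.ker u := inf_le_left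
  set ψ : Module.Dual (ZMod 2) (LinearMap.ker u) := φ.comp (LinearMap.ker u).subtype with hψdef
  have hψ0 : ψ ≠ 0 := by
    intro h
    have h1 : ψ ⟨x0, LinearMap.mem_ker.mpr hx0St.2⟩ = 1 := by
      rw [hψdef]
      simpa using hφt x0 hx0
    rw [h, LinearMap.zero_apply] at h1
    exact absurd h1 (by decide)
  have hWeq : W = (LinearMap.ker ψ).map (LinearMap.ker u).subtype := by
    ext x
    constructor
    · intro hx
      exact ⟨⟨x, hx.1⟩, by simpa [hψdef] using hx.2, rfl⟩
    · rintro ⟨y, hy, rfl⟩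
      refine ⟨y.2, ?_⟩
      simpa [hψdef] using hy
  have hWrank : Module.finrank (ZMod 2) W = d - 2 := by
    rw [hWeq, Submodule.finrank_map_subtype_eq]
    have h1 := ker_rank_succ ψ hψ0
    rw [hker_rank] at h1
    omega
  refine ⟨W, hWrank, ?_⟩
  -- counting
  have hkey : T.filter (fun x => x ∈ W) + t.toFinset.val ≤
      T.filter (fun x => x ∈ LinearMap.ker u) := by
    rw [Multiset.le_iff_count]
    intro a
    rw [Multiset.count_add, Multiset.count_filter, Multiset.count_filter]
    by_cases haW : a ∈ W
    · have haK : a ∈ LinearMap.ker u := hWle haW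
      have hanot : a ∉ t.toFinset := by
        intro hat
        have h1 : φ a = 1 := hφt a (Set.mem_toFinset.mp hat)
        have h0 : φ a = 0 := haW.2
        rw [h0] at h1
        exact absurd h1 (by decide)
      rw [Multiset.count_eq_zero_of_notMem (fun hmem => hanot (Finset.mem_val.mp hmem))]
      simp [haW, haK]
    · simp only [haW, if_false, zero_add]
      by_cases hat : a ∈ t.toFinset
      · have haSt : a ∈ St := hts (Set.mem_toFinset.mp hat)
        have haK : a ∈ LinearMap.ker u := LinearMap.mem_ker.mpr haSt.2
        have hc1 : t.toFinset.val.count a = 1 :=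
          Multiset.count_eq_one_of_mem t.toFinset.nodup (Finset.mem_val.mpr hat)
        have hcT : 1 ≤ T.count a := Multiset.one_le_count_iff_mem.mpr haSt.1
        rw [hc1]
        simp only [haK, if_true]
        omega
      · rw [Multiset.count_eq_zero_of_notMem (fun hmem => hat (Finset.mem_val.mp hmem))]
        simp
  have hcards := Multiset.card_le_card hkey
  rw [Multiset.card_add, Finset.card_val, htcard] at hcards
  exact hcards


private lemma coreLemma (T : Multiset V)
    (H1 : ∀ u v : Module.Dual (ZMod 2) V, u ≠ 0 → v ≠ 0 → u ≠ v →
      ∃ h ∈ T, u h = 1 ∧ v h = 1)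
    (hd : 2 ≤ Module.finrank (ZMod 2) V) :
    3 * Module.finrank (ZMod 2) V ≤ Multiset.card T + 3 := by
  set d := Module.finrank (ZMod 2) V with hdd
  -- a nonzero functional exists
  haveI : Nontrivial (Module.Dual (ZMod 2) V) := by
    apply Module.nontrivial_of_finrank_pos (R := ZMod 2)
    rw [Subspace.dual_finrank_eq]
    omega
  obtain ⟨u0, hu0⟩ := exists_ne (0 : Module.Dual (ZMod 2) V)
  -- the minimum count over codimension-2 subspaces
  set Mset : Set ℕ :=
    {m | ∃ W : Submodule (ZMod 2) V, Module.finrank (ZMod 2) W = d - 2 ∧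
      Multiset.card (T.filter (fun x => x ∈ W)) = m} with hMset
  have hMne : Mset.Nonempty := by
    obtain ⟨W, hWr, -⟩ := lemA T H1 hd u0 hu0
    exact ⟨_, W, hWr, rfl⟩
  set m0 := sInf Mset with hm0
  obtain ⟨W0, hW0r, hW0c⟩ := Nat.sInf_mem hMne
  have hyper : ∀ u : Module.Dual (ZMod 2) V, u ≠ 0 →
      m0 + (d - 1) ≤ Multiset.card (T.filter (fun x => x ∈ LinearMap.ker u)) := by
    intro u hu
    obtain ⟨W, hWr, hWc⟩ := lemA T H1 hd u hu
    have : m0 ≤ Multiset.card (T.filter (fun x => x ∈ W)) :=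
      Nat.sInf_le ⟨W, hWr, rfl⟩
    omega
  -- the annihilator of W0 has dimension 2
  have hannrank : Module.finrank (ZMod 2) W0.dualAnnihilator = 2 := by
    have h1 : Module.finrank (ZMod 2) (V ⧸ W0) =
        Module.finrank (ZMod 2) W0.dualAnnihilator :=
      LinearEquiv.finrank_eq (Subspace.quotEquivAnnihilator W0)
    have h2 := Submodule.finrank_quotient_add_finrank W0
    omega
  set B2 := Module.finBasisOfFinrankEq (ZMod 2) W0.dualAnnihilator hannrank with hB2
  set u1 : Module.Dual (ZMod 2) V := ↑(B2 0) with hu1def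
  set u2 : Module.Dual (ZMod 2) V := ↑(B2 1) with hu2def
  have hB2ne : B2 0 ≠ B2 1 := by
    intro h
    have := B2.injective h
    simp at this
  have hu1 : u1 ≠ 0 := by
    intro h
    exact Basis.ne_zero B2 0 (Subtype.coe_injective (h.trans rfl))
  have hu2 : u2 ≠ 0 := by
    intro h
    exact Basis.ne_zero B2 1 (Subtype.coe_injective (h.trans rfl))
  have hu12 : u1 ≠ u2 := by
    intro h
    exact hB2ne (Subtype.coe_injective h)
  have hu3 : u1 + u2 ≠ 0 := by
    intro h
    apply hu12
    have h' := congrArg (fun z => z + u2) h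
    simp only [zero_add] at h'
    rw [add_assoc, m2_add_self u2, add_zero] at h'
    exact h'
  -- vanishing on W0
  have hvan1 : ∀ x ∈ W0, u1 x = 0 := fun x hx =>
    (Submodule.mem_dualAnnihilator _).mp (B2 0).2 x hx
  have hvan2 : ∀ x ∈ W0, u2 x = 0 := fun x hx =>
    (Submodule.mem_dualAnnihilator _).mp (B2 1).2 x hx
  -- if both vanish at x then x ∈ W0
  have hone : ∀ x : V, u1 x = 0 → u2 x = 0 → x ∈ W0 := by
    intro x h1 h2
    rw [← Subspace.forall_mem_dualAnnihilator_apply_eq_zero_iff W0 x]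
    intro ρ hρ
    have hrepr := B2.sum_repr ⟨ρ, hρ⟩
    have : ρ = (B2.repr ⟨ρ, hρ⟩ 0) • u1 + (B2.repr ⟨ρ, hρ⟩ 1) • u2 := by
      have := congrArg (Subtype.val : W0.dualAnnihilator → Module.Dual (ZMod 2) V) hrepr
      rw [Fin.sum_univ_two] at this
      
      simpa [hu1def, hu2def] using this.symm
    rw [this]
    simp [LinearMap.add_apply, LinearMap.smul_apply, h1, h2]
  -- counting inequality
  have hkey : T.filter (fun x => x ∈ LinearMap.ker u1) +
      T.filter (fun x => x ∈ LinearMap.ker u2) +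
      T.filter (fun x => x ∈ LinearMap.ker (u1 + u2)) ≤
      T + T.filter (fun x => x ∈ W0) + T.filter (fun x => x ∈ W0) := by
    rw [Multiset.le_iff_count]
    intro a
    simp only [Multiset.count_add, Multiset.count_filter]
    by_cases haW : a ∈ W0
    · have h1 : a ∈ LinearMap.ker u1 := LinearMap.mem_ker.mpr (hvan1 a haW)
      have h2 : a ∈ LinearMap.ker u2 := LinearMap.mem_ker.mpr (hvan2 a haW)
      have h3 : a ∈ LinearMap.ker (u1 + u2) := by
        rw [LinearMap.mem_ker, LinearMap.add_apply, hvan1 a haW, hvan2 a haW, add_zero]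
      simp [h1, h2, h3, haW]
    · have hnot12 : ¬ (a ∈ LinearMap.ker u1 ∧ a ∈ LinearMap.ker u2) := by
        rintro ⟨ha1, ha2⟩
        exact haW (hone a (LinearMap.mem_ker.mp ha1) (LinearMap.mem_ker.mp ha2))
      have himp13 : a ∈ LinearMap.ker u1 → a ∈ LinearMap.ker (u1 + u2) →
          a ∈ LinearMap.ker u2 := by
        intro h1 h3
        rw [LinearMap.mem_ker] at h1 h3 ⊢
        rw [LinearMap.add_apply, h1, zero_add] at h3
        exact h3
      have himp23 : a ∈ LinearMap.ker u2 → a ∈ LinearMap.ker (u1 + u2) →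
          a ∈ LinearMap.ker u1 := by
        intro h2 h3
        rw [LinearMap.mem_ker] at h2 h3 ⊢
        rw [LinearMap.add_apply, h2, add_zero] at h3
        exact h3
      by_cases ha1 : a ∈ LinearMap.ker u1
      · by_cases ha2 : a ∈ LinearMap.ker u2
        · exact absurd ⟨ha1, ha2⟩ hnot12
        · by_cases ha3 : a ∈ LinearMap.ker (u1 + u2)
          · exact absurd ⟨ha1, himp13 ha1 ha3⟩ hnot12
          · simp only [if_pos ha1, if_neg ha2, if_neg ha3, if_neg haW]
            omega
      · by_cases ha2 : a ∈ LinearMap.ker u2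
        · by_cases ha3 : a ∈ LinearMap.ker (u1 + u2)
          · exact absurd ⟨himp23 ha2 ha3, ha2⟩ hnot12
          · simp only [if_neg ha1, if_pos ha2, if_neg ha3, if_neg haW]
            omega
        · by_cases ha3 : a ∈ LinearMap.ker (u1 + u2)
          · simp only [if_neg ha1, if_neg ha2, if_pos ha3, if_neg haW]
            omega
          · simp only [if_neg ha1, if_neg ha2, if_neg ha3, if_neg haW]
            omega
  -- put the pieces together
  have hcards := Multiset.card_le_card hkey
  simp only [Multiset.card_add] at hcards
  rw [hW0c] at hcards
  have k1 := hyper u1 hu1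
  have k2 := hyper u2 hu2
  have k3 := hyper (u1 + u2) hu3
  omega


end Statement17Core

section Statement17Main

open Module

private lemma statement17_aux (r : ℕ) (hr : 1 ≤ r) (S : Multiset (Fin r → ZMod 2))
    (hS : (3 * r + 5) / 2 ≤ Multiset.card S) : HasKDisjointZeroSum 2 S := by
  classical
  by_contra hbad
  set n := S.toList.length with hnn
  have hcards : Multiset.card S = n := (Multiset.length_toList S).symm
  set f : Fin n → (Fin r → ZMod 2) := fun i => S.toList.get i with hf
  have hmapS : Multiset.map f (Finset.univ.val) = S := by
    rw [Fin.univ_val_map]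
    show ((List.ofFn f : List (Fin r → ZMod 2)) : Multiset (Fin r → ZMod 2)) = S
    rw [hf]
    rw [List.ofFn_get S.toList]
    exact Multiset.coe_toList S
  -- the linear map recording subset sums
  set Φ : (Fin n → ZMod 2) →ₗ[ZMod 2] (Fin r → ZMod 2) :=
    { toFun := fun x => ∑ i, x i • f i
      map_add' := by
        intro a b
        simp [Pi.add_apply, add_smul, Finset.sum_add_distrib]
      map_smul' := by
        intro c a
        simp [Pi.smul_apply, smul_eq_mul, mul_smul, Finset.smul_sum] } with hΦ
  set C := LinearMap.ker Φ with hC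
  -- dimension bound
  have hrank : n ≤ Module.finrank (ZMod 2) C + r := by
    have h1 := LinearMap.finrank_range_add_finrank_ker Φ
    rw [← hC] at h1
    have h2 : Module.finrank (ZMod 2) (Fin n → ZMod 2) = n := by
      rw [Module.finrank_fintype_fun_eq_card, Fintype.card_fin]
    have h3 : Module.finrank (ZMod 2) (LinearMap.range Φ) ≤ r := by
      refine le_trans (Submodule.finrank_le _) ?_
      rw [Module.finrank_fintype_fun_eq_card, Fintype.card_fin]
    omega
  -- intersecting property
  have hint : ∀ c c' : C, c ≠ 0 → c' ≠ 0 →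
      ∃ i : Fin n, (c : Fin n → ZMod 2) i = 1 ∧ (c' : Fin n → ZMod 2) i = 1 := by
    intro c c' hc hc'
    by_contra hno
    push_neg at hno
    apply hbad
    -- each nonzero kernel element gives a zero-sum subsequence
    have mkA : ∀ x : C, x ≠ 0 →
        IsZeroSumSeq ((Finset.univ.filter
          (fun i => (x : Fin n → ZMod 2) i = 1)).val.map f) := by
      intro x hx
      constructor
      · -- nonempty
        have hxne : ∃ i, (x : Fin n → ZMod 2) i ≠ 0 := by
          by_contra hno2
          push_neg at hno2
          apply hx
          apply Subtype.coe_injective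
          funext i
          exact hno2 i
        obtain ⟨i, hi⟩ := hxne
        have hi1 : (x : Fin n → ZMod 2) i = 1 := by
          rcases zmod2_em ((x : Fin n → ZMod 2) i) with h | h
          · exact absurd h hi
          · exact h
        intro hzero
        rw [Multiset.map_eq_zero] at hzero
        have : i ∈ Finset.univ.filter (fun i => (x : Fin n → ZMod 2) i = 1) :=
          Finset.mem_filter.mpr ⟨Finset.mem_univ i, hi1⟩
        rw [← Finset.mem_val, hzero] at this
        exact absurd this (Multiset.notMem_zero i)
      · -- zero sum
        have hsum : ((Finset.univ.filter
            (fun i => (x : Fin n → ZMod 2) i = 1)).val.map f).sum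
            = ∑ i ∈ Finset.univ.filter (fun i => (x : Fin n → ZMod 2) i = 1), f i :=
          (Finset.sum_eq_multiset_sum _ f).symm
        rw [hsum]
        have h2 : ∑ i ∈ Finset.univ.filter (fun i => (x : Fin n → ZMod 2) i = 1), f i
            = ∑ i, (x : Fin n → ZMod 2) i • f i := by
          rw [Finset.sum_filter]
          apply Finset.sum_congr rfl
          intro i _
          rcases zmod2_em ((x : Fin n → ZMod 2) i) with h | h
          · simp [h]
          · simp [h]
        rw [h2]
        exact x.2
    refine ⟨{((Finset.univ.filter (fun i => (c : Fin n → ZMod 2) i = 1)).val.map f),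
             ((Finset.univ.filter (fun i => (c' : Fin n → ZMod 2) i = 1)).val.map f)}, ?_, ?_, ?_⟩
    · rfl
    · intro A hA
      rw [Multiset.insert_eq_cons, Multiset.mem_cons, Multiset.mem_singleton] at hA
      rcases hA with rfl | rfl
      · exact mkA c hc
      · exact mkA c' hc'
    · -- the union is a subsequence of S
      have hsum2 : ({((Finset.univ.filter (fun i => (c : Fin n → ZMod 2) i = 1)).val.map f),
          ((Finset.univ.filter (fun i => (c' : Fin n → ZMod 2) i = 1)).val.map f)} :
            Multiset (Multiset (Fin r → ZMod 2))).sum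
          = (Finset.univ.filter (fun i => (c : Fin n → ZMod 2) i = 1)).val.map f
            + (Finset.univ.filter (fun i => (c' : Fin n → ZMod 2) i = 1)).val.map f := by
        rw [Multiset.insert_eq_cons, Multiset.sum_cons, Multiset.sum_singleton]
      rw [hsum2, ← Multiset.map_add]
      rw [← hmapS]
      apply Multiset.map_le_map
      rw [Multiset.le_iff_count]
      intro i
      rw [Multiset.count_add]
      have hcu : (Finset.univ.val : Multiset (Fin n)).count i = 1 :=
        Multiset.count_eq_one_of_mem Finset.univ.nodup (Finset.mem_val.mpr (Finset.mem_univ i))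
      rw [hcu]
      by_cases h1 : (c : Fin n → ZMod 2) i = 1
      · have h2 : ¬ (c' : Fin n → ZMod 2) i = 1 := fun h2 => (hno i) h1 h2
        have hm2 : i ∉ (Finset.univ.filter (fun j => (c' : Fin n → ZMod 2) j = 1)).val := by
          intro hmem
          exact h2 (Finset.mem_filter.mp (Finset.mem_val.mp hmem)).2
        rw [Multiset.count_eq_zero_of_notMem hm2]
        have : (Finset.univ.filter (fun j => (c : Fin n → ZMod 2) j = 1)).val.count i ≤ 1 :=
          Multiset.nodup_iff_count_le_one.mp (Finset.nodup _) i
        omega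
      · have hm1 : i ∉ (Finset.univ.filter (fun j => (c : Fin n → ZMod 2) j = 1)).val := by
          intro hmem
          exact h1 (Finset.mem_filter.mp (Finset.mem_val.mp hmem)).2
        rw [Multiset.count_eq_zero_of_notMem hm1]
        have : (Finset.univ.filter (fun j => (c' : Fin n → ZMod 2) j = 1)).val.count i ≤ 1 :=
          Multiset.nodup_iff_count_le_one.mp (Finset.nodup _) i
        omega
  -- apply the core bound to the dual of the kernel
  have hdV : Module.finrank (ZMod 2) (Module.Dual (ZMod 2) C) = Module.finrank (ZMod 2) C :=
    Subspace.dual_finrank_eq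
  have hln : (3 * r + 5) / 2 ≤ n := hcards ▸ hS
  have hd2 : 2 ≤ Module.finrank (ZMod 2) (Module.Dual (ZMod 2) C) := by
    rw [hdV]; omega
  set Tm : Multiset (Module.Dual (ZMod 2) C) :=
    (Finset.univ.val : Multiset (Fin n)).map
      (fun i => (LinearMap.proj i : (Fin n → ZMod 2) →ₗ[ZMod 2] ZMod 2).comp C.subtype)
      with hTm
  have hTcard : Multiset.card Tm = n := by
    rw [hTm, Multiset.card_map, Finset.card_val, Finset.card_univ, Fintype.card_fin]
  have H1 : ∀ u v : Module.Dual (ZMod 2) (Module.Dual (ZMod 2) C),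
      u ≠ 0 → v ≠ 0 → u ≠ v → ∃ h ∈ Tm, u h = 1 ∧ v h = 1 := by
    intro u v hu hv _
    set e := Module.evalEquiv (ZMod 2) C with he
    have hc : e.symm u ≠ 0 := by
      intro h
      apply hu
      rw [← e.apply_symm_apply u, h]
      exact _root_.map_zero e
    have hc' : e.symm v ≠ 0 := by
      intro h
      apply hv
      rw [← e.apply_symm_apply v, h]
      exact _root_.map_zero e
    obtain ⟨i, hi1, hi2⟩ := hint (e.symm u) (e.symm v) hc hc'
    refine ⟨(LinearMap.proj i : (Fin n → ZMod 2) →ₗ[ZMod 2] ZMod 2).comp C.subtype,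
      Multiset.mem_map_of_mem _ (Finset.mem_val.mpr (Finset.mem_univ i)), ?_, ?_⟩
    · rw [← Module.apply_evalEquiv_symm_apply]
      exact hi1
    · rw [← Module.apply_evalEquiv_symm_apply]
      exact hi2
  have hcore := coreLemma Tm H1 hd2
  rw [hdV, hTcard] at hcore
  omega

end Statement17Main


theorem statement17 (r : ℕ) (hr : 1 ≤ r) :
    2 * Dk (Fin r → ZMod 2) 2 < 3 * r + 6 := by
  have hmem : (3 * r + 5) / 2 ∈ {ℓ : ℕ | ∀ S : Multiset (Fin r → ZMod 2),
      ℓ ≤ Multiset.card S → HasKDisjointZeroSum 2 S} :=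
    fun S hS => statement17_aux r hr S hS
  have hle : Dk (Fin r → ZMod 2) 2 ≤ (3 * r + 5) / 2 := Nat.sInf_le hmem
  omega
end

section
/- Let k, r ≥ 1 and 0 ≤ s ≤ r. Then D_k(C_2^r) ≤ D_{D_k(C_2^s) − s}(C_2^{r−s}) + s. -/
open Multiset

set_option maxHeartbeats 1000000

section Helpers

set_option linter.unusedSectionVars false
variable {α β : Type*} [DecidableEq α] [DecidableEq β]

lemma le_of_le_cons_of_not_mem {t s : Multiset α} {a : α}
    (h : t ≤ a ::ₘ s) (ha : a ∉ t) : t ≤ s := by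
  rw [Multiset.le_iff_count] at h ⊢
  intro x
  rcases eq_or_ne x a with rfl | hx
  · simp [Multiset.count_eq_zero_of_notMem ha]
  · have := h x
    simpa [Multiset.count_cons, hx] using this

lemma exists_le_map (f : α → β) :
    ∀ (S : Multiset α) (U : Multiset β), U ≤ S.map f → ∃ B ≤ S, B.map f = U := by
  intro S
  induction S using Multiset.induction with
  | empty =>
      intro U hU
      simp only [Multiset.map_zero, Multiset.le_zero] at hU
      exact ⟨0, le_refl _, by simp [hU]⟩
  | cons a S ih =>
      intro U hU
      rw [Multiset.map_cons] at hU
      by_cases hfa : f a ∈ U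
      · have h1 : U.erase (f a) ≤ S.map f := by
          simpa using Multiset.erase_le_erase (f a) hU
        obtain ⟨B, hB, hBm⟩ := ih _ h1
        refine ⟨a ::ₘ B, Multiset.cons_le_cons a hB, ?_⟩
        rw [Multiset.map_cons, hBm, Multiset.cons_erase hfa]
      · have h1 : U ≤ S.map f := le_of_le_cons_of_not_mem hU hfa
        obtain ⟨B, hB, hBm⟩ := ih _ h1
        exact ⟨B, le_trans hB (Multiset.le_cons_self _ _), hBm⟩

lemma exists_lift_blocks (f : α → β) :
    ∀ (T : Multiset (Multiset β)) (S : Multiset α), T.sum ≤ S.map f →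
      ∃ C : Multiset (Multiset α), C.sum ≤ S ∧ C.map (Multiset.map f) = T := by
  intro T
  induction T using Multiset.induction with
  | empty => intro S h; exact ⟨0, by simp, by simp⟩
  | cons A T ih =>
      intro S h
      rw [Multiset.sum_cons] at h
      have hA : A ≤ S.map f := le_trans (Multiset.le_add_right _ _) h
      obtain ⟨B, hBS, hBA⟩ := exists_le_map f S A hA
      have hsplit : S.map f = B.map f + (S - B).map f := by
        rw [← Multiset.map_add]
        congr 1
        exact (add_tsub_cancel_of_le hBS).symm
      have h2 : T.sum ≤ (S - B).map f := by
        have h3 : A + T.sum ≤ A + (S - B).map f := by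
          rw [hsplit, hBA] at h
          exact h
        exact le_of_add_le_add_left h3
      obtain ⟨C, hCS, hCT⟩ := ih (S - B) h2
      refine ⟨B ::ₘ C, ?_, by rw [Multiset.map_cons, hBA, hCT]⟩
      rw [Multiset.sum_cons]
      calc B + C.sum ≤ B + (S - B) := add_le_add_right hCS _
        _ = S := add_tsub_cancel_of_le hBS

lemma mem_le_sum {A : Multiset α} {T : Multiset (Multiset α)} (h : A ∈ T) : A ≤ T.sum := by
  obtain ⟨T', rfl⟩ := Multiset.exists_cons_of_mem h
  rw [Multiset.sum_cons]
  exact Multiset.le_add_right _ _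

lemma card_le_card_sum {T : Multiset (Multiset α)} (h : ∀ A ∈ T, A ≠ 0) :
    Multiset.card T ≤ Multiset.card T.sum := by
  induction T using Multiset.induction with
  | empty => simp
  | cons A T ih =>
      rw [Multiset.sum_cons, Multiset.card_cons, Multiset.card_add]
      have h1 : 1 ≤ Multiset.card A := by
        have := h A (Multiset.mem_cons_self _ _)
        rwa [Nat.one_le_iff_ne_zero, Ne, Multiset.card_eq_zero]
      have h2 := ih (fun B hB => h B (Multiset.mem_cons_of_mem hB))
      omega

lemma mem_sum_blocks {x : α} {T : Multiset (Multiset α)} (h : x ∈ T.sum) :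
    ∃ A ∈ T, x ∈ A := by
  induction T using Multiset.induction with
  | empty => simp at h
  | cons A T ih =>
      rw [Multiset.sum_cons, Multiset.mem_add] at h
      rcases h with h | h
      · exact ⟨A, Multiset.mem_cons_self _ _, h⟩
      · obtain ⟨B, hB, hx⟩ := ih h
        exact ⟨B, Multiset.mem_cons_of_mem hB, hx⟩

end Helpers

section SubstLemmas

variable {G : Type*} [AddCommGroup G] [DecidableEq G]

lemma hasK_subst_one {k : ℕ} (B N : Multiset G)
    (hB : B ≠ 0) (h : HasKDisjointZeroSum k (B.sum ::ₘ N)) :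
    HasKDisjointZeroSum k (B + N) := by
  obtain ⟨T, hcard, hzs, hle⟩ := h
  by_cases hσ : B.sum ∈ T.sum
  · obtain ⟨A, hAT, hσA⟩ := mem_sum_blocks hσ
    have hTcard : 1 ≤ Multiset.card T := by
      rw [Nat.one_le_iff_ne_zero, Ne, Multiset.card_eq_zero]
      intro h0; rw [h0] at hAT; simp at hAT
    have herase : (A.erase B.sum).sum = A.sum - B.sum := by
      have h2 := congrArg Multiset.sum (Multiset.cons_erase hσA)
      rw [Multiset.sum_cons] at h2
      rw [← h2]; abel
    refine ⟨((A.erase B.sum) + B) ::ₘ T.erase A, ?_, ?_, ?_⟩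
    · rw [Multiset.card_cons, Multiset.card_erase_of_mem hAT, ← Nat.succ_eq_add_one,
        Nat.succ_pred_eq_of_pos hTcard, hcard]
    · intro A' hA'
      rcases Multiset.mem_cons.mp hA' with rfl | hA'
      · constructor
        · intro h0
          apply hB
          rw [← Multiset.le_zero, ← h0]
          exact Multiset.le_add_left _ _
        · have hAsum := (hzs A hAT).2
          rw [Multiset.sum_add, herase, hAsum]
          abel
      · exact hzs A' (Multiset.mem_of_mem_erase hA')
    · rw [Multiset.sum_cons]
      have h1 : A.erase B.sum + (T.erase A).sum = (T.sum).erase B.sum := by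
        have hT : T.sum = A + (T.erase A).sum := by
          conv_lhs => rw [← Multiset.cons_erase hAT]
          rw [Multiset.sum_cons]
        rw [hT, Multiset.erase_add_left_pos _ hσA]
      have h2 : (T.sum).erase B.sum ≤ N := by
        have := Multiset.erase_le_erase B.sum hle
        simpa using this
      have h3 : A.erase B.sum + B + (T.erase A).sum
          = (A.erase B.sum + (T.erase A).sum) + B := by
        rw [add_right_comm]
      rw [h3, h1]
      calc (T.sum).erase B.sum + B ≤ N + B := add_le_add_left h2 B
        _ = B + N := add_comm _ _
  · have hTN : T.sum ≤ N := le_of_le_cons_of_not_mem hle hσ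
    exact ⟨T, hcard, hzs, le_trans hTN (Multiset.le_add_left _ _)⟩

lemma hasK_mono {k : ℕ} {S S' : Multiset G} (h : S ≤ S')
    (hK : HasKDisjointZeroSum k S) : HasKDisjointZeroSum k S' := by
  obtain ⟨T, h1, h2, h3⟩ := hK
  exact ⟨T, h1, h2, le_trans h3 h⟩

lemma hasK_subst (k : ℕ) :
    ∀ (T : Multiset (Multiset G)) (Γ : Multiset G), (∀ B ∈ T, B ≠ 0) →
      HasKDisjointZeroSum k (T.map Multiset.sum + Γ) →
      HasKDisjointZeroSum k (T.sum + Γ) := by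
  intro T
  induction T using Multiset.induction with
  | empty => simpa using fun Γ h => h
  | cons B T ih =>
      intro Γ hne h
      rw [Multiset.map_cons, Multiset.cons_add] at h
      have h1 : HasKDisjointZeroSum k (B + (T.map Multiset.sum + Γ)) :=
        hasK_subst_one _ _ (hne B (Multiset.mem_cons_self _ _)) h
      have h2 : HasKDisjointZeroSum k (T.map Multiset.sum + (B + Γ)) := by
        rwa [add_left_comm] at h1
      have h3 := ih (B + Γ) (fun B' hB' => hne B' (Multiset.mem_cons_of_mem hB')) h2
      have e : (B ::ₘ T).sum + Γ = T.sum + (B + Γ) := by rw [Multiset.sum_cons]; abel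
      rw [e]; exact h3

end SubstLemmas

lemma zmod2_eq_one {x : ZMod 2} (h : x ≠ 0) : x = 1 := by
  revert x; decide

lemma exists_zero_sum (m : ℕ) (S : Multiset (Fin m → ZMod 2)) (h : m + 1 ≤ Multiset.card S) :
    ∃ T ≤ S, T ≠ 0 ∧ T.sum = 0 := by
  classical
  set l := S.toList with hl
  have hlS : (l : Multiset (Fin m → ZMod 2)) = S := S.coe_toList
  have hlen : m + 1 ≤ l.length := by
    rw [← hlS] at h; simpa using h
  have hdep : ¬ LinearIndependent (ZMod 2) l.get := by
    intro hind
    have h2 := hind.fintype_card_le_finrank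
    simp [Module.finrank_pi] at h2
    omega
  obtain ⟨c, hsum, i, hi⟩ := Fintype.not_linearIndependent_iff.mp hdep
  set A : Finset (Fin l.length) := Finset.univ.filter (fun j => c j ≠ 0) with hA
  refine ⟨A.val.map l.get, ?_, ?_, ?_⟩
  · calc A.val.map l.get ≤ (Finset.univ : Finset (Fin l.length)).val.map l.get := by
          apply Multiset.map_le_map
          exact Finset.val_le_iff.mpr (Finset.subset_univ A)
      _ = S := by
          rw [Fin.univ_def]
          show ((List.finRange l.length : Multiset _).map l.get) = S
          rw [Multiset.map_coe, List.map_get_finRange, hlS]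
  · have hiA : i ∈ A := by simp [hA, hi]
    intro h0
    rw [Multiset.map_eq_zero, Finset.val_eq_zero] at h0
    rw [h0] at hiA
    simp at hiA
  · have : (A.val.map l.get).sum = ∑ j ∈ A, l.get j := by
      rw [Finset.sum]
    rw [this]
    have h1 : ∀ j ∈ A, l.get j = c j • l.get j := by
      intro j hj
      rw [hA] at hj
      simp only [Finset.mem_filter] at hj
      rw [zmod2_eq_one hj.2, one_smul]
    rw [Finset.sum_congr rfl h1]
    rw [← hsum]
    apply Finset.sum_subset (Finset.subset_univ A)
    intro x _ hx
    rw [hA] at hx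
    simp only [Finset.mem_filter, Finset.mem_univ, true_and, not_not] at hx
    rw [hx, zero_smul]

lemma exists_sub_of_card (m : ℕ) {α : Type*} (S : Multiset α) (h : m ≤ Multiset.card S) :
    ∃ S' ≤ S, Multiset.card S' = m := by
  obtain ⟨l, rfl⟩ := S.exists_rep  -- ?
  refine ⟨(l.take m : Multiset α), ?_, ?_⟩
  · exact Multiset.coe_le.mpr (l.take_sublist m).subperm
  · simp at h ⊢
    omega

lemma hasK_of_card (m : ℕ) : ∀ (j : ℕ) (S : Multiset (Fin m → ZMod 2)),
    j * (m + 1) ≤ Multiset.card S → HasKDisjointZeroSum j S := by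
  intro j
  induction j with
  | zero => exact fun S _ => ⟨0, by simp, by simp, by simp⟩
  | succ j ih =>
      intro S hS
      have h1 : m + 1 ≤ Multiset.card S := le_trans (by nlinarith) hS
      obtain ⟨S', hS'le, hS'card⟩ := exists_sub_of_card (m + 1) S h1
      obtain ⟨T0, hT0S', hT0ne, hT0sum⟩ := exists_zero_sum m S' (le_of_eq hS'card.symm)
      have hT0S : T0 ≤ S := le_trans hT0S' hS'le
      have hT0card : Multiset.card T0 ≤ m + 1 := by
        rw [← hS'card]; exact Multiset.card_le_card hT0S'
      have hcard2 : j * (m + 1) ≤ Multiset.card (S - T0) := by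
        rw [Multiset.card_sub hT0S]
        rw [add_mul, one_mul] at hS
        omega
      obtain ⟨T, hTcard, hTzs, hTle⟩ := ih _ hcard2
      refine ⟨T0 ::ₘ T, by simp [hTcard], ?_, ?_⟩
      · intro A hA
        rcases Multiset.mem_cons.mp hA with rfl | hA
        exacts [⟨hT0ne, hT0sum⟩, hTzs A hA]
      · rw [Multiset.sum_cons]
        calc T0 + T.sum ≤ T0 + (S - T0) := add_le_add_right hTle _
          _ = S := add_tsub_cancel_of_le hT0S

lemma dkSet_nonempty (m j : ℕ) :
    { ℓ : ℕ | ∀ S : Multiset (Fin m → ZMod 2), ℓ ≤ Multiset.card S →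
      HasKDisjointZeroSum j S }.Nonempty :=
  ⟨j * (m + 1), fun S hS => hasK_of_card m j S hS⟩

lemma dk_spec (m j : ℕ) : ∀ S : Multiset (Fin m → ZMod 2),
    Dk (Fin m → ZMod 2) j ≤ Multiset.card S → HasKDisjointZeroSum j S :=
  Nat.sInf_mem (dkSet_nonempty m j)

lemma le_dk (m j : ℕ) : j ≤ Dk (Fin m → ZMod 2) j := by
  by_contra hcon
  push_neg at hcon
  obtain ⟨T, hc, hzs, hle⟩ := dk_spec m j
    (Multiset.replicate (Dk (Fin m → ZMod 2) j) 0) (by simp)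
  have h1 : Multiset.card T ≤ Multiset.card T.sum :=
    card_le_card_sum (fun A hA => (hzs A hA).1)
  have h2 : Multiset.card T.sum ≤ Dk (Fin m → ZMod 2) j := by
    simpa using Multiset.card_le_card hle
  omega

lemma basis_multiset_no_zero_sum (s : ℕ) :
    ∀ T ≤ (Finset.univ : Finset (Fin s)).val.map
        (fun i => Pi.single i (1 : ZMod 2)), T ≠ 0 → T.sum ≠ 0 := by
  classical
  intro T hT hTne
  obtain ⟨B, hBle, hBmap⟩ := exists_le_map _ _ _ hT
  have hBnodup : B.Nodup := Multiset.nodup_of_le hBle (Finset.univ.nodup)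
  have hBne : B ≠ 0 := by
    intro h0; rw [h0] at hBmap; simp [← hBmap] at hTne
  obtain ⟨i, hi⟩ := Multiset.exists_mem_of_ne_zero hBne
  set F : Finset (Fin s) := ⟨B, hBnodup⟩ with hF
  intro hzero
  have hsum : T.sum = ∑ j ∈ F, Pi.single j (1 : ZMod 2) := by
    rw [← hBmap]; rfl
  have := congrFun (hsum ▸ hzero) i
  rw [Finset.sum_apply] at this
  have hterm : ∀ j ∈ F, (Pi.single j (1 : ZMod 2) : Fin s → ZMod 2) i
      = if j = i then (1 : ZMod 2) else 0 := by
    intro j _; rw [Pi.single_apply]; simp [eq_comm]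
  rw [Finset.sum_congr rfl hterm, Finset.sum_ite_eq' F i (fun _ => (1 : ZMod 2))] at this
  have hiF : i ∈ F := hi
  rw [if_pos hiF] at this
  simp at this

lemma dk_lower (s j : ℕ) (hj : 1 ≤ j) : s + 1 ≤ Dk (Fin s → ZMod 2) j := by
  classical
  by_contra hcon
  push_neg at hcon
  set E := (Finset.univ : Finset (Fin s)).val.map (fun i => Pi.single i (1 : ZMod 2)) with hE
  have hcard : Multiset.card E = s := by simp [hE]
  obtain ⟨T, hc, hzs, hle⟩ := dk_spec s j E (by omega)
  have hTne : T ≠ 0 := by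
    intro h0; rw [h0] at hc; simp at hc; omega
  obtain ⟨A, hA⟩ := Multiset.exists_mem_of_ne_zero hTne
  have hAle : A ≤ E := by
    calc A ≤ T.sum := by
          obtain ⟨T', rfl⟩ := Multiset.exists_cons_of_mem hA
          rw [Multiset.sum_cons]; exact Multiset.le_add_right _ _
      _ ≤ E := hle
  exact basis_multiset_no_zero_sum s A hAle (hzs A hA).1 (hzs A hA).2

lemma exists_ker_proj (r d : ℕ) (W W' : Submodule (ZMod 2) (Fin r → ZMod 2))
    (h : IsCompl W W') (hd : Module.finrank (ZMod 2) W' = d) :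
    ∃ θ : (Fin r → ZMod 2) →ₗ[ZMod 2] (Fin d → ZMod 2), ∀ x, θ x = 0 ↔ x ∈ W := by
  let ψ : W' ≃ₗ[ZMod 2] (Fin d → ZMod 2) :=
    (Module.finBasisOfFinrankEq (ZMod 2) W' hd).equivFun
  let proj := W'.projectionOnto W h.symm
  refine ⟨ψ.toLinearMap ∘ₗ proj, fun x => ?_⟩
  constructor
  · intro hx
    have h1 : proj x = 0 := by
      apply ψ.injective
      simpa using hx
    have h2 : x ∈ LinearMap.ker proj := h1
    rwa [Submodule.ker_projectionOnto] at h2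
  · intro hx
    have h1 : proj x = 0 := by
      have h2 : x ∈ LinearMap.ker proj := by
        rw [Submodule.ker_projectionOnto]; exact hx
      exact h2
    simp [LinearMap.comp_apply, h1, proj]

noncomputable def padMap (t s : ℕ) : (Fin t → ZMod 2) →ₗ[ZMod 2] (Fin s → ZMod 2) where
  toFun v := fun j => if hj : (j : ℕ) < t then v ⟨j, hj⟩ else 0
  map_add' x y := by funext j; by_cases hj : (j : ℕ) < t <;> simp [hj]
  map_smul' c x := by funext j; by_cases hj : (j : ℕ) < t <;> simp [hj]

lemma padMap_inj (t s : ℕ) (hts : t ≤ s) {v : Fin t → ZMod 2}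
    (h : padMap t s v = 0) : v = 0 := by
  funext i
  have := congrFun h ⟨i, lt_of_lt_of_le i.2 hts⟩
  simpa [padMap] using this

lemma exists_indep_family (r s : ℕ) (S : Multiset (Fin r → ZMod 2))
    (hge : s ≤ Module.finrank (ZMod 2)
      (Submodule.span (ZMod 2) ((S.toFinset : Finset (Fin r → ZMod 2)) : Set (Fin r → ZMod 2)))) :
    ∃ g : Fin s → (Fin r → ZMod 2), LinearIndependent (ZMod 2) g ∧ ∀ i, g i ∈ S := by
  classical
  set Sset : Set (Fin r → ZMod 2) := ↑S.toFinset with hSset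
  obtain ⟨b, hbsub, hbspan, hbind⟩ := exists_linearIndependent (ZMod 2) Sset
  have hbfin : b.Finite := Set.Finite.subset S.toFinset.finite_toSet hbsub
  haveI : Fintype b := hbfin.fintype
  have hcard : Module.finrank (ZMod 2) (Submodule.span (ZMod 2) Sset) = b.toFinset.card := by
    rw [← hbspan]
    exact finrank_span_set_eq_card hbind
  have hs' : s ≤ b.toFinset.card := by rw [← hcard]; exact hge
  obtain ⟨c, hcsub, hccard⟩ := Finset.exists_subset_card_eq hs'
  have hcsubset : (c : Set (Fin r → ZMod 2)) ⊆ b := by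
    intro x hx
    rw [Finset.mem_coe] at hx
    have h2 := hcsub hx
    rwa [Set.mem_toFinset] at h2
  have hcind : LinearIndependent (ZMod 2)
      (fun x : (c : Set (Fin r → ZMod 2)) => (x : Fin r → ZMod 2)) :=
    LinearIndepOn.mono (R := ZMod 2) (v := id) (s := b) hbind hcsubset
  let e : Fin s ≃ (c : Set (Fin r → ZMod 2)) :=
    (finCongr hccard.symm).trans (c.equivFin.symm.trans
      (Equiv.subtypeEquivRight (fun x => (Finset.mem_coe).symm)))
  refine ⟨fun i => (e i : Fin r → ZMod 2), hcind.comp e e.injective, ?_⟩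
  intro i
  have h1 : ((e i : Fin r → ZMod 2)) ∈ (c : Set (Fin r → ZMod 2)) := (e i).2
  have h2 := hcsubset h1
  have h3 := hbsub h2
  rw [hSset, Finset.mem_coe, Multiset.mem_toFinset] at h3
  exact h3

-- now the main membership lemma
set_option maxHeartbeats 1000000 in
lemma main_mem (k r s : ℕ) (hk : 1 ≤ k) (hs : s ≤ r)
    (S : Multiset (Fin r → ZMod 2))
    (hcard : Dk (Fin (r - s) → ZMod 2) (Dk (Fin s → ZMod 2) k - s) + s ≤ Multiset.card S) :
    HasKDisjointZeroSum k S := by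
  classical
  let F := ZMod 2
  let V := Fin r → ZMod 2
  set Ds := Dk (Fin s → ZMod 2) k with hDs
  set k' := Ds - s with hk'
  set D' := Dk (Fin (r - s) → ZMod 2) k' with hD'
  have hDs1 : s + 1 ≤ Ds := dk_lower s k hk
  have hk'D : k' ≤ D' := le_dk _ _
  by_cases hrank : s ≤ Module.finrank F
      (Submodule.span F ((S.toFinset : Finset V) : Set V))
  · -- case A
    obtain ⟨g, hgind, hgS⟩ := exists_indep_family r s S hrank
    set Γ : Multiset V := (Finset.univ : Finset (Fin s)).val.map g with hΓ
    have hΓnodup : Γ.Nodup :=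
      Multiset.Nodup.map hgind.injective (Finset.univ.nodup)
    have hΓS : Γ ≤ S := by
      rw [Multiset.le_iff_count]
      intro x
      by_cases hx : x ∈ Γ
      · have h1 : Multiset.count x Γ ≤ 1 :=
          Multiset.nodup_iff_count_le_one.mp hΓnodup x
        have h2 : 1 ≤ Multiset.count x S := by
          rw [Multiset.one_le_count_iff_mem]
          obtain ⟨i, _, rfl⟩ := Multiset.mem_map.mp hx
          exact hgS i
        omega
      · rw [Multiset.count_eq_zero_of_notMem hx]; omega
    have hΓcard : Multiset.card Γ = s := by simp [hΓ]
    set S₀ := S - Γ with hS₀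
    have hS₀card : Multiset.card S₀ = Multiset.card S - s := by
      rw [hS₀, Multiset.card_sub hΓS, hΓcard]
    set W : Submodule F V := Submodule.span F (Set.range g) with hW
    have hWrank : Module.finrank F W = s := by
      rw [hW, finrank_span_eq_card hgind, Fintype.card_fin]
    obtain ⟨W', hWc⟩ := Submodule.exists_isCompl W
    have hVrank : Module.finrank F V = r := by
      simp [V, F, Module.finrank_pi]
    have hW'rank : Module.finrank F W' = r - s := by
      have := Submodule.finrank_add_eq_of_isCompl hWc
      omega
    obtain ⟨τ, hτ⟩ := exists_ker_proj r (r - s) W W' hWc hW'rank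
    obtain ⟨ρ, hρ⟩ := exists_ker_proj r s W' W hWc.symm hWrank
    have h1 : D' ≤ Multiset.card (S₀.map τ) := by
      rw [Multiset.card_map, hS₀card]; omega
    obtain ⟨T₀, hT₀card, hT₀zs, hT₀le⟩ := dk_spec (r - s) k' (S₀.map τ) h1
    obtain ⟨T', hT'le, hT'map⟩ := exists_lift_blocks τ T₀ S₀ hT₀le
    have hT'card : Multiset.card T' = k' := by
      rw [← hT₀card, ← hT'map, Multiset.card_map]
    have hT'props : ∀ B ∈ T', B ≠ 0 ∧ B.sum ∈ W := by
      intro B hB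
      have himg : B.map τ ∈ T₀ := by
        rw [← hT'map]; exact Multiset.mem_map_of_mem _ hB
      obtain ⟨hne, hzero⟩ := hT₀zs _ himg
      constructor
      · intro h0; rw [h0] at hne; simp at hne
      · have hsum : τ B.sum = 0 := by
          rw [map_multiset_sum]; exact hzero
        exact (hτ _).mp hsum
    set M : Multiset V := T'.map Multiset.sum + Γ with hM
    have hMW : ∀ x ∈ M, x ∈ W := by
      intro x hx
      rcases Multiset.mem_add.mp hx with hx | hx
      · obtain ⟨B, hB, rfl⟩ := Multiset.mem_map.mp hx
        exact (hT'props B hB).2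
      · obtain ⟨i, _, rfl⟩ := Multiset.mem_map.mp hx
        exact Submodule.subset_span (Set.mem_range_self i)
    have hMcard : Multiset.card M = k' + s := by
      rw [hM, Multiset.card_add, Multiset.card_map, hT'card, hΓcard]
    have h3 : Ds ≤ Multiset.card (M.map ρ) := by
      rw [Multiset.card_map, hMcard]; omega
    obtain ⟨C₀, hC₀card, hC₀zs, hC₀le⟩ := dk_spec s k (M.map ρ) h3
    obtain ⟨C, hCle, hCmap⟩ := exists_lift_blocks ρ C₀ M hC₀le
    have hCcard : Multiset.card C = k := by
      rw [← hC₀card, ← hCmap, Multiset.card_map]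
    have hCzs : ∀ c ∈ C, IsZeroSumSeq c := by
      intro c hc
      have himg : c.map ρ ∈ C₀ := by
        rw [← hCmap]; exact Multiset.mem_map_of_mem _ hc
      obtain ⟨hne, hzero⟩ := hC₀zs _ himg
      have hcW : c.sum ∈ W := by
        apply multiset_sum_mem
        intro y hy
        exact hMW y (Multiset.mem_of_le (le_trans (mem_le_sum hc) hCle) hy)
      have hρc : ρ c.sum = 0 := by rw [map_multiset_sum]; exact hzero
      have hcW' : c.sum ∈ W' := (hρ _).mp hρc
      constructor
      · intro h0; rw [h0] at hne; simp at hne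
      · have := hWc.disjoint
        rw [Submodule.disjoint_def] at this
        exact this _ hcW hcW'
    have h5 : HasKDisjointZeroSum k M := ⟨C, hCcard, hCzs, hCle⟩
    have h6 := hasK_subst k T' Γ (fun B hB => (hT'props B hB).1) h5
    have h7 : T'.sum + Γ ≤ S := by
      have h8 := add_le_add_left hT'le Γ
      rwa [tsub_add_cancel_of_le hΓS] at h8
    exact hasK_mono h7 h6
  · -- case B
    push_neg at hrank
    set W : Submodule F V := Submodule.span F ((S.toFinset : Finset V) : Set V) with hW
    set t := Module.finrank F W with ht
    have hts : t ≤ s := le_of_lt hrank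
    obtain ⟨W', hWc⟩ := Submodule.exists_isCompl W
    obtain ⟨θ₀, hθ₀⟩ := exists_ker_proj r t W' W hWc.symm rfl
    set θ : V →ₗ[F] (Fin s → ZMod 2) := (padMap t s) ∘ₗ θ₀ with hθ
    have hcard2 : Ds ≤ Multiset.card (S.map θ) := by
      rw [Multiset.card_map]
      omega
    obtain ⟨C₀, hC₀card, hC₀zs, hC₀le⟩ := dk_spec s k (S.map θ) hcard2
    obtain ⟨C, hCle, hCmap⟩ := exists_lift_blocks θ C₀ S hC₀le
    have hCcard : Multiset.card C = k := by
      rw [← hC₀card, ← hCmap, Multiset.card_map]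
    refine ⟨C, hCcard, ?_, hCle⟩
    intro c hc
    have himg : c.map θ ∈ C₀ := by
      rw [← hCmap]; exact Multiset.mem_map_of_mem _ hc
    obtain ⟨hne, hzero⟩ := hC₀zs _ himg
    have hcW : c.sum ∈ W := by
      apply multiset_sum_mem
      intro y hy
      apply Submodule.subset_span
      have hyS : y ∈ S := Multiset.mem_of_le (le_trans (mem_le_sum hc) hCle) hy
      rw [Finset.mem_coe, Multiset.mem_toFinset]
      exact hyS
    have hθc : θ c.sum = 0 := by rw [map_multiset_sum]; exact hzero
    have hθ₀c : θ₀ c.sum = 0 := by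
      apply padMap_inj t s hts
      rw [hθ] at hθc
      exact hθc
    have hcW' : c.sum ∈ W' := (hθ₀ _).mp hθ₀c
    constructor
    · intro h0; rw [h0] at hne; simp at hne
    · have hd := hWc.disjoint
      rw [Submodule.disjoint_def] at hd
      exact hd _ hcW hcW'

theorem statement19 (k r s : ℕ) (hk : 1 ≤ k) (hr : 1 ≤ r) (hs : s ≤ r) :
    Dk (Fin r → ZMod 2) k ≤
      Dk (Fin (r - s) → ZMod 2) (Dk (Fin s → ZMod 2) k - s) + s := by
  apply Nat.sInf_le
  intro S hS
  exact main_mem k r s hk hs S hS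
end
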